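/- Let p_e be an element of a Lie group P acting affinely on a finite-dimensional real vector space W, such that the set {p_e^n : n ∈ ℤ} is relatively compact in the affine group, and let p_h be an affine transformation commuting with p_e and fixing a point v₀ ∈ W. Then p_h fixes pointwise the convex hull C of the closure of the orbit {p_e^n · v₀}, and p_e has a fixed point in C; consequently p_e and p_h have a common fixed point, and so does p = p_h p_e. -/

import Mathlib

open Filter Topology

/-- The convex hull of a compact set in a finite-dimensional real normed space is compact
(Carathéodory). -/
theorem isCompact_convexHull_of_isCompact' {E : Type*} [NormedAddCommGroup E]
    [NormedSpace ℝ E] [FiniteDimensional ℝ E] {K : Set E} (hK : IsCompact K) :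
    IsCompact (convexHull ℝ K) := by
  classical
  rcases K.eq_empty_or_nonempty with rfl | ⟨k₀, hk₀⟩
  · simp [convexHull_empty]
  set n := Module.finrank ℝ E + 1 with hn
  set f : (Fin n → ℝ) × (Fin n → E) → E := fun p => ∑ i, p.1 i • p.2 i with hf
  have hfc : Continuous f := continuous_finset_sum _ fun i _ =>
    ((continuous_apply i).comp continuous_fst).smul ((continuous_apply i).comp continuous_snd)
  have hS : IsCompact (stdSimplex ℝ (Fin n) ×ˢ Set.univ.pi fun _ : Fin n => K) :=
    (isCompact_stdSimplex ..).prod (isCompact_univ_pi fun _ => hK)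
  have himg : f '' (stdSimplex ℝ (Fin n) ×ˢ Set.univ.pi fun _ : Fin n => K)
      = convexHull ℝ K := by
    apply Set.Subset.antisymm
    · rintro x ⟨⟨wgt, z⟩, ⟨⟨hw0, hw1⟩, hz⟩, rfl⟩
      exact (convex_convexHull ℝ K).sum_mem (fun i _ => hw0 i) hw1
        (fun i _ => subset_convexHull ℝ K (hz i (Set.mem_univ i)))
    · intro x hx
      obtain ⟨ι, hι, z, wgt, hzK, hai, hw0, hw1, hx'⟩ := eq_pos_convex_span_of_mem_convexHull hx
      have hcard : Fintype.card ι ≤ n := by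
        have h1 := hai.card_le_finrank_succ
        exact h1.trans (Nat.add_le_add_right (Submodule.finrank_le _) 1)
      obtain ⟨e⟩ : Nonempty (ι ↪ Fin n) := by
        rw [Function.Embedding.nonempty_iff_card_le, Fintype.card_fin]; exact hcard
      set w' : Fin n → ℝ := fun j => if h : ∃ i, e i = j then wgt h.choose else 0 with hw'
      set z' : Fin n → E := fun j => if h : ∃ i, e i = j then z h.choose else k₀ with hz'
      have hwe : ∀ i, w' (e i) = wgt i := by
        intro i
        have h : ∃ i', e i' = e i := ⟨i, rfl⟩
        have h2 : h.choose = i := e.injective h.choose_spec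
        simp only [hw', dif_pos h, h2]
      have hze : ∀ i, z' (e i) = z i := by
        intro i
        have h : ∃ i', e i' = e i := ⟨i, rfl⟩
        have h2 : h.choose = i := e.injective h.choose_spec
        simp only [hz', dif_pos h, h2]
      have hoffw : ∀ j ∈ Finset.univ, j ∉ Finset.univ.image e → w' j = 0 := by
        intro j _ hj
        have h : ¬ ∃ i, e i = j := by
          rintro ⟨i, rfl⟩; exact hj (Finset.mem_image.mpr ⟨i, Finset.mem_univ i, rfl⟩)
        simp only [hw', dif_neg h]
      have hinj : ∀ i ∈ Finset.univ, ∀ i' ∈ Finset.univ, e i = e i' → i = i' :=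
        fun i _ i' _ h => e.injective h
      refine ⟨(w', z'), ⟨⟨?_, ?_⟩, fun j _ => ?_⟩, ?_⟩
      · intro j
        by_cases h : ∃ i, e i = j
        · simp only [hw', dif_pos h]; exact (hw0 _).le
        · simp [hw', dif_neg h]
      · rw [← Finset.sum_subset (Finset.subset_univ (Finset.univ.image e)) hoffw,
          Finset.sum_image hinj]
        simpa [hwe] using hw1
      · by_cases h : ∃ i, e i = j
        · obtain ⟨i, rfl⟩ := h
          show z' (e i) ∈ K
          rw [hze]
          exact hzK (Set.mem_range_self i)
        · simp only [hz', dif_neg h]; exact hk₀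
      · show ∑ j, w' j • z' j = x
        rw [← Finset.sum_subset (Finset.subset_univ (Finset.univ.image e))
            (fun j hj hj' => by rw [hoffw j hj hj', zero_smul]),
          Finset.sum_image hinj]
        simpa [hwe, hze] using hx'
  rw [← himg]; exact hS.image hfc

/-- Let `pe` be an affine transformation of a finite-dimensional real vector
space whose orbits under iteration (forwards and backwards) are relatively compact, and
let `ph` be an affine transformation commuting with `pe` and fixing a point `v₀`.  Then
`ph` fixes pointwise the convex hull `C` of the closure of the orbit of `v₀` under `pe`,
`pe` has a fixed point in `C`, and consequently `pe`, `ph` and `p = ph ∘ pe` have a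
common fixed point. -/
theorem affine_common_fixed_point
    (E : Type*) [NormedAddCommGroup E] [NormedSpace ℝ E] [FiniteDimensional ℝ E]
    (pe ph : E ≃ᵃ[ℝ] E)
    (hrel : ∀ w : E, IsCompact (closure (Set.range fun n : ℤ => (pe ^ n) w)))
    (hcomm : ph * pe = pe * ph)
    (v₀ : E) (hfix : ph v₀ = v₀) :
    (∀ w ∈ convexHull ℝ (closure (Set.range fun n : ℤ => (pe ^ n) v₀)), ph w = w) ∧
    (∃ w ∈ convexHull ℝ (closure (Set.range fun n : ℤ => (pe ^ n) v₀)),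
      pe w = w ∧ ph w = w ∧ ph (pe w) = w) := by
  classical
  set o : ℤ → E := fun n => (pe ^ n) v₀ with ho
  have hco : Commute ph pe := hcomm
  -- `ph` fixes every point of the orbit
  have horb : ∀ n : ℤ, ph (o n) = o n := by
    intro n
    have h2 : ph * pe ^ n = pe ^ n * ph := hco.zpow_right n
    calc ph (o n) = (ph * pe ^ n) v₀ := rfl
      _ = (pe ^ n * ph) v₀ := by rw [h2]
      _ = o n := by show (pe ^ n) (ph v₀) = o n; rw [hfix]
  -- the fixed point set of `ph` is closed and convex
  set g : E →ᵃ[ℝ] E := ph.toAffineMap - AffineMap.id ℝ E with hg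
  have hgx : ∀ x : E, g x = ph x - x := fun x => by simp [hg]
  have hSeq : {x : E | ph x = x} = ⇑g ⁻¹' {0} := by
    ext x; simp [hgx, sub_eq_zero]
  have hSconv : Convex ℝ {x : E | ph x = x} := by
    rw [hSeq]; exact (convex_singleton 0).affine_preimage g
  have hSclosed : IsClosed {x : E | ph x = x} := by
    rw [hSeq]
    exact isClosed_singleton.preimage g.continuous_of_finiteDimensional
  have part1 : ∀ w ∈ convexHull ℝ (closure (Set.range o)), ph w = w := by
    intro w hw
    refine convexHull_min (closure_minimal ?_ hSclosed) hSconv hw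
    rintro x ⟨m, rfl⟩
    exact horb m
  -- compactness of the hull
  have hK : IsCompact (closure (Set.range o)) := hrel v₀
  have hCcpt : IsCompact (convexHull ℝ (closure (Set.range o))) :=
    isCompact_convexHull_of_isCompact' hK
  have hoC : ∀ n : ℤ, o n ∈ convexHull ℝ (closure (Set.range o)) :=
    fun n => subset_convexHull ℝ _ (subset_closure ⟨n, rfl⟩)
  obtain ⟨M, hM⟩ : ∃ M, ∀ y ∈ closure (Set.range o), ‖y‖ ≤ M :=
    isBounded_iff_forall_norm_le.mp hK.isBounded
  have hMo : ∀ n : ℤ, ‖o n‖ ≤ M := fun n => hM _ (subset_closure ⟨n, rfl⟩)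
  -- the orbit as a ℕ-indexed sequence and its Cesàro averages
  set u : ℕ → E := fun i => o (i : ℤ) with hu
  have hshift : ∀ i : ℕ, pe (u i) = u (i + 1) := by
    intro i
    have h1 : ((i : ℤ) + 1) = ((i + 1 : ℕ) : ℤ) := by push_cast; ring
    calc pe (u i) = (pe * pe ^ (i : ℤ)) v₀ := rfl
      _ = (pe ^ ((i : ℤ) + 1)) v₀ := by rw [← zpow_one_add, add_comm]
      _ = u (i + 1) := by rw [h1]
  set a : ℕ → E := fun N => ((N : ℝ) + 1)⁻¹ • ∑ i ∈ Finset.range (N + 1), u i with haa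
  have haC : ∀ N : ℕ, a N ∈ convexHull ℝ (closure (Set.range o)) := by
    intro N
    have hs : ∑ i ∈ Finset.range (N + 1), ((N : ℝ) + 1)⁻¹ = 1 := by
      rw [Finset.sum_const, Finset.card_range, nsmul_eq_mul]
      push_cast
      field_simp
    have := (convex_convexHull ℝ (closure (Set.range o))).sum_mem
      (t := Finset.range (N + 1)) (w := fun _ => ((N : ℝ) + 1)⁻¹) (z := fun i => u i)
      (fun i _ => by positivity) hs (fun i _ => hoC i)
    simpa [haa, Finset.smul_sum] using this
  -- the affine recursion for the averages
  have hlin : ∀ x : E, pe x = pe.linear x + pe 0 := by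
    intro x
    have := congrFun pe.toAffineMap.decomp x
    simpa using this
  have hkey : ∀ N : ℕ, pe (a N) = a N + ((N : ℝ) + 1)⁻¹ • (u (N + 1) - u 0) := by
    intro N
    have hne : ((N : ℝ) + 1) ≠ 0 := by positivity
    have hterm : ∀ i : ℕ, pe.linear (u i) = u (i + 1) - pe 0 := by
      intro i
      have := hlin (u i)
      rw [hshift i] at this
      rw [this]; abel
    have hsum1 : ∑ i ∈ Finset.range (N + 1), u (i + 1)
        = ∑ i ∈ Finset.range (N + 1), u i + u (N + 1) - u 0 := by
      have h1 := Finset.sum_range_succ' u (N + 1)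
      have h2 := Finset.sum_range_succ u (N + 1)
      rw [h2] at h1
      linear_combination (norm := abel) - h1
    have hsum : ∑ i ∈ Finset.range (N + 1), pe.linear (u i)
        = (∑ i ∈ Finset.range (N + 1), u i + u (N + 1) - u 0) - (N + 1 : ℕ) • pe 0 := by
      rw [← hsum1]
      simp only [hterm]
      rw [Finset.sum_sub_distrib, Finset.sum_const, Finset.card_range]
    have hns : ((N : ℝ) + 1)⁻¹ • ((N + 1 : ℕ) • pe 0) = pe 0 := by
      rw [← Nat.cast_smul_eq_nsmul ℝ, smul_smul]
      push_cast
      rw [inv_mul_cancel₀ hne, one_smul]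
    calc pe (a N) = pe.linear (a N) + pe 0 := hlin _
      _ = ((N : ℝ) + 1)⁻¹ • ∑ i ∈ Finset.range (N + 1), pe.linear (u i) + pe 0 := by
          rw [haa, map_smul, map_sum]
      _ = ((N : ℝ) + 1)⁻¹ • ((∑ i ∈ Finset.range (N + 1), u i + u (N + 1) - u 0)
            - (N + 1 : ℕ) • pe 0) + pe 0 := by rw [hsum]
      _ = ((N : ℝ) + 1)⁻¹ • (∑ i ∈ Finset.range (N + 1), u i)
            + ((N : ℝ) + 1)⁻¹ • (u (N + 1) - u 0)
            - ((N : ℝ) + 1)⁻¹ • ((N + 1 : ℕ) • pe 0) + pe 0 := by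
          have hr : ∑ i ∈ Finset.range (N + 1), u i + u (N + 1) - u 0
              = ∑ i ∈ Finset.range (N + 1), u i + (u (N + 1) - u 0) := by abel
          rw [hr, smul_sub, smul_add]
      _ = a N + ((N : ℝ) + 1)⁻¹ • (u (N + 1) - u 0) := by
          rw [hns, haa]
          abel
  -- the error term tends to zero
  have herr : Tendsto (fun N : ℕ => ((N : ℝ) + 1)⁻¹ • (u (N + 1) - u 0)) atTop (𝓝 0) := by
    apply squeeze_zero_norm (a := fun N : ℕ => 1 / ((N : ℝ) + 1) * (M + M))
    · intro N
      rw [norm_smul, one_div]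
      have h1 : ‖(((N : ℝ) + 1)⁻¹ : ℝ)‖ = ((N : ℝ) + 1)⁻¹ := by
        rw [Real.norm_eq_abs, abs_of_pos]; positivity
      rw [h1]
      have h2 : ‖u (N + 1) - u 0‖ ≤ M + M :=
        (norm_sub_le _ _).trans (add_le_add (hMo _) (hMo _))
      have h3 : (0 : ℝ) ≤ ((N : ℝ) + 1)⁻¹ := by positivity
      exact mul_le_mul_of_nonneg_left h2 h3
    · simpa using tendsto_one_div_add_atTop_nhds_zero_nat.mul_const (M + M)
  -- extract a convergent subsequence of averages
  obtain ⟨w, hwC, φ, hφ, hlim⟩ := hCcpt.tendsto_subseq haC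
  have hcont : Continuous pe := pe.toAffineMap.continuous_of_finiteDimensional
  have h1 : Tendsto (fun k => pe (a (φ k))) atTop (𝓝 (pe w)) := (hcont.tendsto w).comp hlim
  have h2 : Tendsto (fun k => pe (a (φ k))) atTop (𝓝 w) := by
    have heq : (fun k => pe (a (φ k)))
        = fun k => a (φ k) + ((φ k : ℝ) + 1)⁻¹ • (u (φ k + 1) - u 0) :=
      funext fun k => hkey (φ k)
    rw [heq]
    simpa using hlim.add (herr.comp hφ.tendsto_atTop)
  have hpew : pe w = w := tendsto_nhds_unique h1 h2
  exact ⟨part1, w, hwC, hpew, part1 w hwC, by rw [hpew]; exact part1 w hwC⟩
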